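/- Let f : (0,∞) → ℝ be measurable and nonnegative with Laplace transform F(p) = ∫_0^∞ e^{-pt} f(t) dt convergent for all p > 0. Then for all p > 0, ∫_0^∞ e^{-px} ( (πx)^{-1/2} ∫_0^∞ exp(-t²/(4x)) f(t) dt ) dx = p^{-1/2} F(√p). -/

import Mathlib

open MeasureTheory Real Set

lemma phi_deriv (A C : ℝ) {u : ℝ} (hu : u ≠ 0) :
    HasDerivAt (fun u : ℝ => A * u - C / u) (A + C / u ^ 2) u := by
  have h1 : HasDerivAt (fun u : ℝ => A * u) A u := by
    simpa using (hasDerivAt_id u).const_mul A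
  have h2 : HasDerivAt (fun u : ℝ => C / u) (-(C / u ^ 2)) u := by
    have := (hasDerivAt_inv hu).const_mul C
    simpa [div_eq_mul_inv] using this
  have := h1.sub h2
  simp only [sub_neg_eq_add] at this
  exact this

lemma phi_image {a c : ℝ} (ha : 0 < a) (hc : 0 < c) :
    (fun u : ℝ => Real.sqrt a * u - Real.sqrt c / u) '' Ioi 0 = univ := by
  apply eq_univ_of_forall
  intro v
  have hA : 0 < Real.sqrt a := Real.sqrt_pos.mpr ha
  have hC : 0 < Real.sqrt c := Real.sqrt_pos.mpr hc
  set s := Real.sqrt (v ^ 2 + 4 * (Real.sqrt a * Real.sqrt c)) with hs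
  have hs0 : 0 ≤ s := Real.sqrt_nonneg _
  have hs2 : s ^ 2 = v ^ 2 + 4 * (Real.sqrt a * Real.sqrt c) :=
    Real.sq_sqrt (by positivity)
  have hsv : -v < s := by nlinarith [mul_pos hA hC]
  have hnum : 0 < v + s := by linarith
  refine ⟨(v + s) / (2 * Real.sqrt a), mem_Ioi.mpr (div_pos hnum (by positivity)), ?_⟩
  have hne : (v + s) ≠ 0 := ne_of_gt hnum
  field_simp
  nlinarith [hs2, mul_pos hA hC]

lemma phi_injOn {a c : ℝ} (ha : 0 < a) (hc : 0 < c) :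
    InjOn (fun u : ℝ => Real.sqrt a * u - Real.sqrt c / u) (Ioi 0) := by
  have hA : 0 < Real.sqrt a := Real.sqrt_pos.mpr ha
  have hC : 0 < Real.sqrt c := Real.sqrt_pos.mpr hc
  have : StrictMonoOn (fun u : ℝ => Real.sqrt a * u - Real.sqrt c / u) (Ioi 0) := by
    intro u hu v hv huv
    simp only
    have h1 : Real.sqrt a * u ≤ Real.sqrt a * v :=
      mul_le_mul_of_nonneg_left huv.le hA.le
    have h2 : Real.sqrt c / v < Real.sqrt c / u :=
      div_lt_div_of_pos_left hC hu huv
    linarith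
  exact this.injOn

lemma glasser {a c : ℝ} (ha : 0 < a) (hc : 0 < c) :
    IntegrableOn (fun u : ℝ => Real.exp (-(a * u ^ 2 + c / u ^ 2))) (Ioi 0) ∧
    ∫ u in Ioi (0:ℝ), Real.exp (-(a * u ^ 2 + c / u ^ 2))
      = Real.sqrt π / (2 * Real.sqrt a) * Real.exp (-(2 * Real.sqrt (a * c))) := by
  have hA : 0 < Real.sqrt a := Real.sqrt_pos.mpr ha
  have hC : 0 < Real.sqrt c := Real.sqrt_pos.mpr hc
  set A := Real.sqrt a
  set C := Real.sqrt c
  have hA2 : A ^ 2 = a := Real.sq_sqrt ha.le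
  have hC2 : C ^ 2 = c := Real.sq_sqrt hc.le
  -- derivative hypothesis
  have hder : ∀ u ∈ Ioi (0:ℝ), HasDerivWithinAt (fun u : ℝ => A * u - C / u)
      (A + C / u ^ 2) (Ioi 0) u :=
    fun u hu => (phi_deriv A C (ne_of_gt hu)).hasDerivWithinAt
  have hinj := phi_injOn ha hc
  have himg := phi_image ha hc
  have hgauss : Integrable (fun v : ℝ => Real.exp (-v ^ 2)) := by
    simpa using integrable_exp_neg_mul_sq (one_pos)
  -- change of variables
  have key := integral_image_eq_integral_abs_deriv_smul measurableSet_Ioi hder hinj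
      (fun v : ℝ => Real.exp (-v ^ 2))
  rw [himg] at key
  have hH : IntegrableOn (fun u : ℝ => |A + C / u ^ 2| •
      Real.exp (-(A * u - C / u) ^ 2)) (Ioi 0) := by
    have := (integrableOn_image_iff_integrableOn_abs_deriv_smul measurableSet_Ioi hder hinj
      (fun v : ℝ => Real.exp (-v ^ 2))).mp (by rw [himg]; exact hgauss.integrableOn)
    exact this
  -- rewrite integrand on Ioi 0
  have h_eq : ∀ u ∈ Ioi (0:ℝ), |A + C / u ^ 2| • Real.exp (-(A * u - C / u) ^ 2)
      = Real.exp (2 * (A * C)) * ((A + C / u ^ 2) * Real.exp (-(a * u ^ 2 + c / u ^ 2))) := by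
    intro u hu
    have hu0 : (0:ℝ) < u := hu
    have habs : |A + C / u ^ 2| = A + C / u ^ 2 := abs_of_pos (by positivity)
    have hexp : (-(A * u - C / u) ^ 2) = 2 * (A * C) + (-(a * u ^ 2 + c / u ^ 2)) := by
      rw [← hA2, ← hC2]
      field_simp
      ring
    rw [smul_eq_mul, habs, hexp, Real.exp_add]
    ring
  have hsum_int : IntegrableOn
      (fun u : ℝ => (A + C / u ^ 2) * Real.exp (-(a * u ^ 2 + c / u ^ 2))) (Ioi 0) := by
    have h2 : IntegrableOn (fun u : ℝ => (Real.exp (2 * (A * C)))⁻¹ *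
        (Real.exp (2 * (A * C)) * ((A + C / u ^ 2) * Real.exp (-(a * u ^ 2 + c / u ^ 2)))))
        (Ioi 0) :=
      (hH.congr_fun h_eq measurableSet_Ioi).const_mul (Real.exp (2 * (A * C)))⁻¹
    refine h2.congr_fun (fun u hu => ?_) measurableSet_Ioi
    field_simp
  have hsum_val : ∫ u in Ioi (0:ℝ), (A + C / u ^ 2) * Real.exp (-(a * u ^ 2 + c / u ^ 2))
      = Real.sqrt π * Real.exp (-(2 * (A * C))) := by
    have h1 : ∫ v : ℝ, Real.exp (-v ^ 2) = Real.sqrt π := by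
      have := integral_gaussian (1:ℝ)
      simpa using this
    rw [setIntegral_univ, h1, setIntegral_congr_fun measurableSet_Ioi h_eq,
      MeasureTheory.integral_const_mul] at key
    rw [Real.exp_neg, key]
    rw [mul_comm (Real.exp (2 * (A * C))), mul_assoc, mul_inv_cancel₀ (Real.exp_pos _).ne', mul_one]
  -- integrability of the two pieces
  have hmeas0 : Measurable (fun u : ℝ => Real.exp (-(a * u ^ 2 + c / u ^ 2))) := by
    fun_prop
  have hI0 : IntegrableOn (fun u : ℝ => Real.exp (-(a * u ^ 2 + c / u ^ 2))) (Ioi 0) := by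
    refine Integrable.mono' (hsum_int.const_mul A⁻¹) hmeas0.aestronglyMeasurable ?_
    filter_upwards [ae_restrict_mem measurableSet_Ioi] with u hu
    have hu0 : (0:ℝ) < u := hu
    rw [Real.norm_eq_abs, Real.abs_exp]
    have h1 : (1:ℝ) ≤ A⁻¹ * (A + C / u ^ 2) := by
      rw [mul_add, inv_mul_cancel₀ hA.ne']
      have : 0 ≤ A⁻¹ * (C / u ^ 2) := by positivity
      linarith
    nlinarith [Real.exp_pos (-(a * u ^ 2 + c / u ^ 2))]
  have hI2 : IntegrableOn (fun u : ℝ => C / u ^ 2 * Real.exp (-(a * u ^ 2 + c / u ^ 2)))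
      (Ioi 0) := by
    have hm2 : Measurable (fun u : ℝ => C / u ^ 2 * Real.exp (-(a * u ^ 2 + c / u ^ 2))) :=
      (measurable_const.div (measurable_id.pow_const 2)).mul hmeas0
    refine Integrable.mono' hsum_int hm2.aestronglyMeasurable ?_
    filter_upwards [ae_restrict_mem measurableSet_Ioi] with u hu
    have hu0 : (0:ℝ) < u := hu
    rw [Real.norm_eq_abs, abs_of_nonneg (by positivity)]
    have : 0 ≤ A * Real.exp (-(a * u ^ 2 + c / u ^ 2)) := by positivity
    nlinarith [Real.exp_pos (-(a * u ^ 2 + c / u ^ 2))]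
  -- split the sum
  have hsplit : Real.sqrt π * Real.exp (-(2 * (A * C)))
      = A * (∫ u in Ioi (0:ℝ), Real.exp (-(a * u ^ 2 + c / u ^ 2)))
        + ∫ u in Ioi (0:ℝ), C / u ^ 2 * Real.exp (-(a * u ^ 2 + c / u ^ 2)) := by
    rw [← hsum_val, ← MeasureTheory.integral_const_mul, ← integral_add (hI0.const_mul A) hI2]
    apply setIntegral_congr_fun measurableSet_Ioi
    intro u hu
    ring
  -- second substitution : ψ u = (C/A)/u
  set k := C / A with hk
  have hk0 : 0 < k := by positivity
  have hderψ : ∀ u ∈ Ioi (0:ℝ), HasDerivWithinAt (fun u : ℝ => k / u)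
      (-(k / u ^ 2)) (Ioi 0) u := by
    intro u hu
    have hu0 : (0:ℝ) < u := hu
    have := (hasDerivAt_inv (ne_of_gt hu0)).const_mul k
    refine HasDerivAt.hasDerivWithinAt ?_
    simpa [div_eq_mul_inv] using this
  have hinjψ : InjOn (fun u : ℝ => k / u) (Ioi 0) := by
    have : StrictAntiOn (fun u : ℝ => k / u) (Ioi 0) :=
      fun u hu v hv huv => div_lt_div_of_pos_left hk0 hu huv
    exact this.injOn
  have himgψ : (fun u : ℝ => k / u) '' Ioi 0 = Ioi 0 := by
    ext x
    constructor
    · rintro ⟨u, hu, rfl⟩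
      have hu0 : (0:ℝ) < u := hu
      exact mem_Ioi.mpr (by positivity)
    · intro hx
      have hx0 : (0:ℝ) < x := hx
      exact ⟨k / x, mem_Ioi.mpr (by positivity), by field_simp⟩
  have keyψ := integral_image_eq_integral_abs_deriv_smul measurableSet_Ioi hderψ hinjψ
      (fun v : ℝ => Real.exp (-(a * v ^ 2 + c / v ^ 2)))
  rw [himgψ] at keyψ
  have h_eqψ : ∀ u ∈ Ioi (0:ℝ), |(-(k / u ^ 2))| •
      Real.exp (-(a * (k / u) ^ 2 + c / (k / u) ^ 2))
      = A⁻¹ * (C / u ^ 2 * Real.exp (-(a * u ^ 2 + c / u ^ 2))) := by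
    intro u hu
    have hu0 : (0:ℝ) < u := hu
    have habs : |(-(k / u ^ 2))| = k / u ^ 2 := by
      rw [abs_neg, abs_of_nonneg (by positivity)]
    have harg : a * (k / u) ^ 2 + c / (k / u) ^ 2 = a * u ^ 2 + c / u ^ 2 := by
      rw [hk, ← hA2, ← hC2]
      field_simp
      ring
    rw [smul_eq_mul, habs, harg, hk]
    field_simp
  rw [setIntegral_congr_fun measurableSet_Ioi h_eqψ, MeasureTheory.integral_const_mul] at keyψ
  -- conclude
  refine ⟨hI0, ?_⟩
  have hac : Real.sqrt (a * c) = A * C := Real.sqrt_mul ha.le c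
  have hfin : Real.sqrt π * Real.exp (-(2 * (A * C)))
      = 2 * A * ∫ u in Ioi (0:ℝ), Real.exp (-(a * u ^ 2 + c / u ^ 2)) := by
    rw [hsplit]
    have : ∫ u in Ioi (0:ℝ), C / u ^ 2 * Real.exp (-(a * u ^ 2 + c / u ^ 2))
        = A * ∫ u in Ioi (0:ℝ), Real.exp (-(a * u ^ 2 + c / u ^ 2)) := by
      rw [keyψ, ← mul_assoc, mul_inv_cancel₀ hA.ne', one_mul]
    rw [this]; ring
  rw [hac]
  have h2A : (2 * A) ≠ 0 := by positivity
  field_simp at hfin ⊢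
  linarith [hfin]


lemma kernelA {p t : ℝ} (hp : 0 < p) (ht : 0 < t) :
    IntegrableOn (fun x : ℝ => Real.exp (-p * x) *
      ((π * x) ^ (-(1:ℝ)/2) * Real.exp (-t ^ 2 / (4 * x)))) (Ioi 0) ∧
    ∫ x in Ioi (0:ℝ), Real.exp (-p * x) *
      ((π * x) ^ (-(1:ℝ)/2) * Real.exp (-t ^ 2 / (4 * x)))
      = p ^ (-(1:ℝ)/2) * Real.exp (-(Real.sqrt p * t)) := by
  have hπ : (0:ℝ) < π := pi_pos
  have hsπ : (0:ℝ) < Real.sqrt π := Real.sqrt_pos.mpr hπ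
  have hsp : (0:ℝ) < Real.sqrt p := Real.sqrt_pos.mpr hp
  have hc : (0:ℝ) < t ^ 2 / 4 := by positivity
  obtain ⟨hGint, hGval⟩ := glasser hp hc
  set h : ℝ → ℝ := fun x => Real.exp (-p * x) *
      ((π * x) ^ (-(1:ℝ)/2) * Real.exp (-t ^ 2 / (4 * x))) with hh
  have hder : ∀ u ∈ Ioi (0:ℝ), HasDerivWithinAt (fun u : ℝ => u ^ 2) (2 * u) (Ioi 0) u := by
    intro u hu
    simpa using (hasDerivAt_pow 2 u).hasDerivWithinAt
  have hinj : InjOn (fun u : ℝ => u ^ 2) (Ioi 0) := by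
    have : StrictMonoOn (fun u : ℝ => u ^ 2) (Ioi 0) := by
      intro u hu v hv huv
      have hu0 : (0:ℝ) < u := hu
      simp only
      nlinarith
    exact this.injOn
  have himg : (fun u : ℝ => u ^ 2) '' Ioi 0 = Ioi 0 := by
    ext x
    constructor
    · rintro ⟨u, hu, rfl⟩
      exact mem_Ioi.mpr (pow_pos hu 2)
    · intro hx
      exact ⟨Real.sqrt x, mem_Ioi.mpr (Real.sqrt_pos.mpr hx), Real.sq_sqrt (le_of_lt hx)⟩
  have h_eq : ∀ u ∈ Ioi (0:ℝ), |2 * u| • h (u ^ 2)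
      = (2 / Real.sqrt π) * Real.exp (-(p * u ^ 2 + t ^ 2 / 4 / u ^ 2)) := by
    intro u hu
    have hu0 : (0:ℝ) < u := hu
    have hrpow : ((π * u ^ 2 : ℝ)) ^ (-(1:ℝ)/2) = (Real.sqrt π * u)⁻¹ := by
      rw [show (-(1:ℝ)/2) = -(1/2:ℝ) by norm_num, Real.rpow_neg (by positivity),
        ← Real.sqrt_eq_rpow, Real.sqrt_mul hπ.le, Real.sqrt_sq hu0.le]
    rw [smul_eq_mul, abs_of_pos (by positivity : (0:ℝ) < 2 * u), hh]
    simp only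
    rw [hrpow, show (-(p * u ^ 2 + t ^ 2 / 4 / u ^ 2)) = -p * u ^ 2 + -t ^ 2 / (4 * u ^ 2) by
      field_simp; ring, Real.exp_add]
    field_simp
  constructor
  · rw [show (Ioi (0:ℝ)) = (fun u : ℝ => u ^ 2) '' Ioi 0 from himg.symm]
    rw [integrableOn_image_iff_integrableOn_abs_deriv_smul measurableSet_Ioi hder hinj h]
    have hgc : IntegrableOn (fun u : ℝ => (2 / Real.sqrt π) *
        Real.exp (-(p * u ^ 2 + t ^ 2 / 4 / u ^ 2))) (Ioi 0) := hGint.const_mul _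
    exact hgc.congr_fun (fun u hu => (h_eq u hu).symm) measurableSet_Ioi
  · have key := integral_image_eq_integral_abs_deriv_smul measurableSet_Ioi hder hinj h
    rw [himg] at key
    rw [key, setIntegral_congr_fun measurableSet_Ioi h_eq, MeasureTheory.integral_const_mul,
      hGval]
    have h1 : Real.sqrt (p * (t ^ 2 / 4)) = Real.sqrt p * (t / 2) := by
      rw [Real.sqrt_mul hp.le, show (t ^ 2 / 4 : ℝ) = (t / 2) ^ 2 by ring,
        Real.sqrt_sq (by positivity)]
    rw [h1, show p ^ (-(1:ℝ)/2) = (Real.sqrt p)⁻¹ by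
      rw [show (-(1:ℝ)/2) = -(1/2:ℝ) by norm_num, Real.rpow_neg hp.le, ← Real.sqrt_eq_rpow],
      show (-(2 * (Real.sqrt p * (t / 2)))) = -(Real.sqrt p * t) by ring]
    field_simp

theorem laplace_halfSubordination_bar (f : ℝ → ℝ) (hf : Measurable f)
    (hpos : ∀ t ∈ Ioi (0 : ℝ), 0 ≤ f t)
    (hint : ∀ p : ℝ, 0 < p →
      IntegrableOn (fun t => Real.exp (-p * t) * f t) (Ioi 0))
    (F : ℝ → ℝ) (hF : ∀ p : ℝ, F p = ∫ t in Ioi (0 : ℝ), Real.exp (-p * t) * f t) :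
    ∀ p : ℝ, 0 < p →
      (∫ x in Ioi (0 : ℝ), Real.exp (-p * x) *
        ((π * x) ^ (-(1 : ℝ) / 2) *
          ∫ t in Ioi (0 : ℝ), Real.exp (-t ^ 2 / (4 * x)) * f t))
        = p ^ (-(1 : ℝ) / 2) * F (Real.sqrt p) := by
  intro p hp
  have hsp : (0:ℝ) < Real.sqrt p := Real.sqrt_pos.mpr hp
  set c : ℝ → ℝ := fun x => Real.exp (-p * x) * (π * x) ^ (-(1:ℝ)/2) with hc
  set k : ℝ → ℝ → ℝ := fun x t => Real.exp (-t ^ 2 / (4 * x)) * f t with hk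
  set G : ℝ → ℝ := fun x => ∫ t in Ioi (0:ℝ), k x t with hG
  have hc_meas : Measurable c := by fun_prop
  have hc_nonneg : ∀ x ∈ Ioi (0:ℝ), 0 ≤ c x := fun x hx =>
    mul_nonneg (Real.exp_nonneg _) (Real.rpow_nonneg (mul_nonneg pi_pos.le (le_of_lt hx)) _)
  have hk_meas : Measurable (Function.uncurry k) := by
    apply Measurable.mul
    · fun_prop
    · exact hf.comp measurable_snd
  have hk_nonneg : ∀ x : ℝ, ∀ᵐ t ∂(volume.restrict (Ioi (0:ℝ))), 0 ≤ k x t := by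
    intro x
    filter_upwards [ae_restrict_mem measurableSet_Ioi] with t ht
    exact mul_nonneg (Real.exp_nonneg _) (hpos t ht)
  -- integrability of k x on Ioi 0 for x > 0
  have hkint : ∀ x : ℝ, 0 < x → IntegrableOn (fun t => k x t) (Ioi 0) := by
    intro x hx
    refine Integrable.mono' ((hint 1 one_pos).const_mul (Real.exp x)) ?_ ?_
    · exact ((Real.measurable_exp.comp (by fun_prop)).mul hf).aestronglyMeasurable
    · filter_upwards [ae_restrict_mem measurableSet_Ioi] with t ht
      have ht0 : (0:ℝ) < t := ht
      have hft := hpos t ht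
      rw [Real.norm_eq_abs, abs_of_nonneg (mul_nonneg (Real.exp_nonneg _) hft)]
      have harg : -t ^ 2 / (4 * x) ≤ x + (-1 * t) := by
        rw [div_le_iff₀ (by positivity)]
        nlinarith [sq_nonneg (2 * x - t)]
      calc Real.exp (-t ^ 2 / (4 * x)) * f t
          ≤ Real.exp (x + (-1 * t)) * f t :=
            mul_le_mul_of_nonneg_right (Real.exp_le_exp.mpr harg) hft
        _ = Real.exp x * (Real.exp (-1 * t) * f t) := by rw [Real.exp_add]; ring
  have hG_sm : StronglyMeasurable G :=
    (hk_meas.stronglyMeasurable).integral_prod_right'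
  have hG_nonneg : ∀ x : ℝ, 0 ≤ G x := fun x =>
    setIntegral_nonneg measurableSet_Ioi fun t ht =>
      mul_nonneg (Real.exp_nonneg _) (hpos t ht)
  -- Step 1 : rewrite LHS as toReal of a lintegral
  have step1 : (∫ x in Ioi (0:ℝ), Real.exp (-p * x) *
        ((π * x) ^ (-(1:ℝ)/2) * ∫ t in Ioi (0:ℝ), Real.exp (-t ^ 2 / (4 * x)) * f t))
      = (∫⁻ x in Ioi (0:ℝ), ENNReal.ofReal (c x * G x)).toReal := by
    rw [setIntegral_congr_fun measurableSet_Ioi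
      (fun x hx => by simp only [hc, hG, hk]; ring :
        ∀ x ∈ Ioi (0:ℝ), Real.exp (-p * x) * ((π * x) ^ (-(1:ℝ)/2) *
          ∫ t in Ioi (0:ℝ), Real.exp (-t ^ 2 / (4 * x)) * f t) = c x * G x)]
    exact integral_eq_lintegral_of_nonneg_ae
      ((ae_restrict_iff' measurableSet_Ioi).2 (ae_of_all _ fun x hx =>
        mul_nonneg (hc_nonneg x hx) (hG_nonneg x)))
      ((hc_meas.mul hG_sm.measurable).aestronglyMeasurable)
  -- Step 2 : inner ofReal as lintegral
  have step2 : ∫⁻ x in Ioi (0:ℝ), ENNReal.ofReal (c x * G x)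
      = ∫⁻ x in Ioi (0:ℝ), ∫⁻ t in Ioi (0:ℝ), ENNReal.ofReal (c x * k x t) := by
    refine setLIntegral_congr_fun measurableSet_Ioi (fun x hx => ?_)
    have hcx := hc_nonneg x hx
    rw [ENNReal.ofReal_mul hcx,
      ofReal_integral_eq_lintegral_ofReal (hkint x hx) (hk_nonneg x),
      ← lintegral_const_mul' _ _ ENNReal.ofReal_ne_top]
    congr 1
    ext t
    rw [ENNReal.ofReal_mul hcx]
  -- Step 3 : Tonelli
  have step3 : ∫⁻ x in Ioi (0:ℝ), ∫⁻ t in Ioi (0:ℝ), ENNReal.ofReal (c x * k x t)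
      = ∫⁻ t in Ioi (0:ℝ), ∫⁻ x in Ioi (0:ℝ), ENNReal.ofReal (c x * k x t) := by
    apply lintegral_lintegral_swap
    apply Measurable.aemeasurable
    apply ENNReal.measurable_ofReal.comp
    exact (hc_meas.comp measurable_fst).mul
      (hk_meas.comp (measurable_fst.prodMk measurable_snd))
  -- Step 4 : compute the inner x-integral
  have step4 : ∫⁻ t in Ioi (0:ℝ), ∫⁻ x in Ioi (0:ℝ), ENNReal.ofReal (c x * k x t)
      = ∫⁻ t in Ioi (0:ℝ),
          ENNReal.ofReal ((p ^ (-(1:ℝ)/2) * Real.exp (-(Real.sqrt p * t))) * f t) := by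
    refine setLIntegral_congr_fun measurableSet_Ioi (fun t ht => ?_)
    have ht0 : (0:ℝ) < t := ht
    have hft := hpos t ht
    have e1 : ∫⁻ x in Ioi (0:ℝ), ENNReal.ofReal (c x * k x t)
        = ∫⁻ x in Ioi (0:ℝ), ENNReal.ofReal (Real.exp (-p * x) *
            ((π * x) ^ (-(1:ℝ)/2) * Real.exp (-t ^ 2 / (4 * x)))) * ENNReal.ofReal (f t) := by
      refine setLIntegral_congr_fun measurableSet_Ioi (fun x hx => ?_)
      rw [← ENNReal.ofReal_mul (mul_nonneg (Real.exp_nonneg _)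
        (mul_nonneg (Real.rpow_nonneg (mul_nonneg pi_pos.le (le_of_lt hx)) _) (Real.exp_nonneg _)))]
      congr 1
      simp only [hc, hk]
      ring
    rw [e1, lintegral_mul_const' _ _ ENNReal.ofReal_ne_top,
      ← ofReal_integral_eq_lintegral_ofReal (kernelA hp ht0).1
        ((ae_restrict_iff' measurableSet_Ioi).2 (ae_of_all _ fun x hx =>
          mul_nonneg (Real.exp_nonneg _) (mul_nonneg
            (Real.rpow_nonneg (mul_nonneg pi_pos.le (le_of_lt hx)) _) (Real.exp_nonneg _)))),
      (kernelA hp ht0).2,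
      ← ENNReal.ofReal_mul (by positivity)]
  -- Step 5 : back to a Bochner integral
  have hI5 : IntegrableOn
      (fun t => (p ^ (-(1:ℝ)/2) * Real.exp (-(Real.sqrt p * t))) * f t) (Ioi 0) := by
    have h1 : IntegrableOn (fun t => p ^ (-(1:ℝ)/2) *
        (Real.exp (-Real.sqrt p * t) * f t)) (Ioi 0) :=
      (hint (Real.sqrt p) hsp).const_mul _
    exact h1.congr_fun (fun t ht => by ring_nf) measurableSet_Ioi
  have step5 : ∫⁻ t in Ioi (0:ℝ),
        ENNReal.ofReal ((p ^ (-(1:ℝ)/2) * Real.exp (-(Real.sqrt p * t))) * f t)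
      = ENNReal.ofReal (∫ t in Ioi (0:ℝ),
          (p ^ (-(1:ℝ)/2) * Real.exp (-(Real.sqrt p * t))) * f t) := by
    rw [ofReal_integral_eq_lintegral_ofReal hI5
      ((ae_restrict_iff' measurableSet_Ioi).2 (ae_of_all _ fun t ht =>
        mul_nonneg (by positivity) (hpos t ht)))]
  -- final value
  have step6 : ∫ t in Ioi (0:ℝ), (p ^ (-(1:ℝ)/2) * Real.exp (-(Real.sqrt p * t))) * f t
      = p ^ (-(1:ℝ)/2) * F (Real.sqrt p) := by
    rw [hF, ← MeasureTheory.integral_const_mul]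
    refine setIntegral_congr_fun measurableSet_Ioi (fun t ht => ?_)
    rw [neg_mul]
    ring
  rw [step1, step2, step3, step4, step5, step6, ENNReal.toReal_ofReal]
  have : 0 ≤ F (Real.sqrt p) := by
    rw [hF]
    exact setIntegral_nonneg measurableSet_Ioi fun t ht =>
      mul_nonneg (Real.exp_nonneg _) (hpos t ht)
  positivity
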